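/- If R is a Prüfer domain, then every edge labeled graph (G, α) over R satisfies the Universal Difference Property: for all vertices u, v connected in G and every y ∈ ⋂_{P ∈ P(u,v)} α(P), there exists a spline ρ on (G, α) with ρ(u) − ρ(v) = y. -/

import Mathlib

open SimpleGraph

/-- A generalized spline on an edge labeled graph. -/
def IsSpline {V R : Type*} [CommRing R] (G : SimpleGraph V)
    (α : Sym2 V → Ideal R) (ρ : V → R) : Prop :=
  ∀ u v : V, G.Adj u v → ρ u - ρ v ∈ α s(u, v)

/-- The sum of the ideals labeling the edges of a walk. -/
def walkIdealSum {V R : Type*} [CommRing R] (G : SimpleGraph V)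
    (α : Sym2 V → Ideal R) {u w : V} (p : G.Walk u w) : Ideal R :=
  (p.edges.map α).sum

/-- The intersection of `α(P)` over all paths `P` from `u` to `w`. -/
def pathsInf {V R : Type*} [CommRing R] (G : SimpleGraph V)
    (α : Sym2 V → Ideal R) (u w : V) : Ideal R :=
  ⨅ (p : G.Walk u w) (_ : p.IsPath), walkIdealSum G α p

/-- The Universal Difference Property. -/
def UDP {V R : Type*} [CommRing R] (G : SimpleGraph V)
    (α : Sym2 V → Ideal R) : Prop :=
  ∀ u w : V, G.Reachable u w → ∀ x ∈ pathsInf G α u w,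
    ∃ ρ : V → R, IsSpline G α ρ ∧ ρ u - ρ w = x

/-- A Prüfer domain: every nonzero finitely generated ideal is invertible. -/
def IsPruferDomain (R : Type*) [CommRing R] [IsDomain R] : Prop :=
  ∀ I : Ideal R, I ≠ ⊥ → I.FG →
    IsUnit (I : FractionalIdeal (nonZeroDivisors R) (FractionRing R))

set_option linter.unusedSectionVars false

section ListSum
variable {R : Type*} [CommRing R]

lemma listSum_le {L : List (Ideal R)} {K : Ideal R} (h : ∀ I ∈ L, I ≤ K) : L.sum ≤ K := by
  induction L with
  | nil => simp
  | cons a l ih =>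
    rw [List.sum_cons, Submodule.add_eq_sup]
    exact sup_le (h a (by simp)) (ih fun I hI => h I (by simp [hI]))

lemma le_listSum {L : List (Ideal R)} {I : Ideal R} (h : I ∈ L) : I ≤ L.sum := by
  induction L with
  | nil => simp at h
  | cons a l ih =>
    rw [List.sum_cons, Submodule.add_eq_sup]
    rcases List.mem_cons.1 h with h | h
    · exact h ▸ le_sup_left
    · exact (ih h).trans le_sup_right
end ListSum

section Walks
variable {V R : Type*} [CommRing R] {G : SimpleGraph V} {α : Sym2 V → Ideal R}

lemma walkIdealSum_le {u w : V} {p : G.Walk u w} {K : Ideal R}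
    (h : ∀ e ∈ p.edges, α e ≤ K) : walkIdealSum G α p ≤ K :=
  listSum_le (by intro I hI; rcases List.mem_map.1 hI with ⟨e, he, rfl⟩; exact h e he)

lemma le_walkIdealSum {u w : V} {p : G.Walk u w} {e : Sym2 V} (h : e ∈ p.edges) :
    α e ≤ walkIdealSum G α p := le_listSum (List.mem_map.2 ⟨e, h, rfl⟩)

lemma walkIdealSum_reverse {u w : V} (p : G.Walk u w) :
    walkIdealSum G α p.reverse = walkIdealSum G α p := by
  unfold walkIdealSum
  rw [SimpleGraph.Walk.edges_reverse, List.map_reverse, List.sum_reverse]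

lemma walkIdealSum_append {u v w : V} (p : G.Walk u v) (q : G.Walk v w) :
    walkIdealSum G α (p.append q) = walkIdealSum G α p + walkIdealSum G α q := by
  unfold walkIdealSum
  rw [SimpleGraph.Walk.edges_append, List.map_append, List.sum_append]

lemma pathsInf_le_of_path {u w : V} {p : G.Walk u w} (hp : p.IsPath) :
    pathsInf G α u w ≤ walkIdealSum G α p :=
  (iInf_le _ p).trans (iInf_le _ hp)

lemma pathsInf_le_of_walk {u w : V} (p : G.Walk u w) :
    pathsInf G α u w ≤ walkIdealSum G α p := by
  classical
  refine (pathsInf_le_of_path p.bypass_isPath).trans ?_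
  exact walkIdealSum_le fun e he => le_walkIdealSum (p.edges_bypass_subset he)

lemma pathsInf_symm (u w : V) : pathsInf G α u w = pathsInf G α w u := by
  have key : ∀ a b : V, pathsInf G α a b ≤ pathsInf G α b a := by
    intro a b
    refine le_iInf fun p => le_iInf fun hp => ?_
    exact (pathsInf_le_of_walk p.reverse).trans (le_of_eq (walkIdealSum_reverse p))
  exact le_antisymm (key u w) (key w u)

lemma pathsInf_le_edge {u w : V} (h : G.Adj u w) : pathsInf G α u w ≤ α s(u, w) := by
  refine (pathsInf_le_of_walk (SimpleGraph.Walk.cons h SimpleGraph.Walk.nil)).trans ?_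
  simp [walkIdealSum]

lemma pathsInf_self (u : V) : pathsInf G α u u = ⊥ := by
  refine le_bot_iff.mp ((pathsInf_le_of_walk SimpleGraph.Walk.nil).trans ?_)
  simp [walkIdealSum]

lemma pathsInf_eq_finsetInf [Fintype V] [DecidableEq V] [DecidableRel G.Adj] (u w : V) :
    pathsInf G α u w
      = (Finset.univ : Finset (G.Path u w)).inf (fun p => walkIdealSum G α p.1) := by
  rw [Finset.inf_eq_iInf]
  simp only [Finset.mem_univ, iInf_true]
  unfold pathsInf
  rw [iInf_subtype']
end Walks

open FractionalIdeal

section PruferAlg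
variable {R : Type*} [CommRing R] [IsDomain R]

lemma coeIdeal_inf' (I J : Ideal R) :
    ((I ⊓ J : Ideal R) : FractionalIdeal (nonZeroDivisors R) (FractionRing R)) = ↑I ⊓ ↑J := by
  apply le_antisymm
  · exact le_inf ((coeIdeal_le_coeIdeal _).2 inf_le_left)
      ((coeIdeal_le_coeIdeal _).2 inf_le_right)
  · rw [← FractionalIdeal.coe_le_coe, FractionalIdeal.coe_inf]
    intro x hx
    rw [Submodule.mem_inf] at hx
    obtain ⟨h1, h2⟩ := hx
    rw [FractionalIdeal.mem_coe, mem_coeIdeal] at h1 h2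
    obtain ⟨i, hi, rfl⟩ := h1
    obtain ⟨j, hj, hji⟩ := h2
    have hj' : j = i := IsFractionRing.injective R (FractionRing R) hji
    exact FractionalIdeal.mem_coe.2 (mem_coeIdeal_of_mem _ (Submodule.mem_inf.2 ⟨hi, hj' ▸ hj⟩))

variable {K : Type*} [Field K] [Algebra R K] [IsFractionRing R K]

omit [IsDomain R] [IsFractionRing R K] in
lemma unit_inf_mul_add (a b : FractionalIdeal (nonZeroDivisors R) K) (h : IsUnit (a + b)) :
    (a ⊓ b) * (a + b) = a * b := by
  set u := h.unit with hu
  have hus : (↑u : FractionalIdeal (nonZeroDivisors R) K) = a + b := h.unit_spec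
  apply le_antisymm
  · rw [mul_add]
    have h1 : (a ⊓ b) * a ≤ a * b := by
      rw [mul_comm]
      exact mul_right_mono inf_le_right
    have h2 : (a ⊓ b) * b ≤ a * b := mul_left_mono inf_le_left
    rw [← sup_eq_add]
    exact sup_le h1 h2
  · have hc : (a + b) * ↑u⁻¹ = 1 := by rw [← hus]; exact u.mul_inv
    have key : a * b * ↑u⁻¹ ≤ a ⊓ b := by
      refine le_inf ?_ ?_
      · have : b * ↑u⁻¹ ≤ 1 := by
          rw [← hc]; exact mul_left_mono (le_sup_right.trans_eq (sup_eq_add a b))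
        calc a * b * ↑u⁻¹ = a * (b * ↑u⁻¹) := mul_assoc _ _ _
          _ ≤ a * 1 := mul_right_mono this
          _ = a := mul_one a
      · have : a * ↑u⁻¹ ≤ 1 := by
          rw [← hc]; exact mul_left_mono (le_sup_left.trans_eq (sup_eq_add a b))
        calc a * b * ↑u⁻¹ = b * (a * ↑u⁻¹) := by ring
          _ ≤ b * 1 := mul_right_mono this
          _ = b := mul_one b
    have hc2 : (↑u⁻¹ : FractionalIdeal (nonZeroDivisors R) K) * (a + b) = 1 := by
      rw [mul_comm]; exact hc
    calc a * b = a * b * (↑u⁻¹ * (a + b)) := by rw [hc2, mul_one]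
      _ = a * b * ↑u⁻¹ * (a + b) := by ring
      _ ≤ (a ⊓ b) * (a + b) := mul_left_mono key
end PruferAlg

section
variable {R : Type*} [CommRing R] [IsDomain R] {K : Type*} [Field K] [Algebra R K]

set_option maxHeartbeats 1000000 in
omit [IsDomain R] in
lemma frac_distrib (a b c : FractionalIdeal (nonZeroDivisors R) K)
    (habc : IsUnit (a + b + c)) : a ⊓ (b + c) ≤ (a ⊓ b) + (a ⊓ c) := by
  have habc' : IsUnit (a + (b + c)) := by rwa [← add_assoc]
  set w := habc'.unit with hwdef
  have hw : (↑w : FractionalIdeal (nonZeroDivisors R) K) = a + (b + c) := habc'.unit_spec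
  have small : ∀ x : FractionalIdeal (nonZeroDivisors R) K,
      x ≤ a + (b + c) → x * ↑w⁻¹ ≤ 1 := by
    intro x hx
    calc x * ↑w⁻¹ ≤ ↑w * ↑w⁻¹ := mul_left_mono (hw ▸ hx)
      _ = 1 := w.mul_inv
  have ha : a ≤ a + (b + c) := by
    rw [← sup_eq_add]; exact le_sup_left
  have hb : b ≤ a + (b + c) := by
    rw [← sup_eq_add, ← sup_eq_add]; exact le_sup_of_le_right le_sup_left
  have hc : c ≤ a + (b + c) := by
    rw [← sup_eq_add, ← sup_eq_add]; exact le_sup_of_le_right le_sup_right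
  have h1 : a * b * ↑w⁻¹ ≤ a ⊓ b := by
    refine le_inf ?_ ?_
    · calc a * b * ↑w⁻¹ = a * (b * ↑w⁻¹) := mul_assoc _ _ _
        _ ≤ a * 1 := mul_right_mono (small b hb)
        _ = a := mul_one a
    · calc a * b * ↑w⁻¹ = b * (a * ↑w⁻¹) := by ring
        _ ≤ b * 1 := mul_right_mono (small a ha)
        _ = b := mul_one b
  have h2 : a * c * ↑w⁻¹ ≤ a ⊓ c := by
    refine le_inf ?_ ?_
    · calc a * c * ↑w⁻¹ = a * (c * ↑w⁻¹) := mul_assoc _ _ _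
        _ ≤ a * 1 := mul_right_mono (small c hc)
        _ = a := mul_one a
    · calc a * c * ↑w⁻¹ = c * (a * ↑w⁻¹) := by ring
        _ ≤ c * 1 := mul_right_mono (small a ha)
        _ = c := mul_one c
  have hone : (a + (b + c)) * ↑w⁻¹ = 1 := by rw [← hw]; exact w.mul_inv
  have e0 := unit_inf_mul_add a (b + c) habc'
  have eqn : a ⊓ (b + c) = a * b * ↑w⁻¹ + a * c * ↑w⁻¹ := by
    calc a ⊓ (b + c) = (a ⊓ (b + c)) * ((a + (b + c)) * ↑w⁻¹) := by rw [hone, mul_one]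
      _ = ((a ⊓ (b + c)) * (a + (b + c))) * ↑w⁻¹ := by ring
      _ = a * (b + c) * ↑w⁻¹ := by rw [e0]
      _ = a * b * ↑w⁻¹ + a * c * ↑w⁻¹ := by ring
  rw [eqn, ← sup_eq_add, ← sup_eq_add]
  exact sup_le_sup h1 h2
end

section
variable {R : Type*} [CommRing R] [IsDomain R]

set_option maxHeartbeats 1000000 in
lemma prufer_inf_sup_le (hR : IsPruferDomain R) (I J K : Ideal R) :
    I ⊓ (J ⊔ K) ≤ (I ⊓ J) ⊔ (I ⊓ K) := by
  intro x hx
  obtain ⟨hxI, hxJK⟩ := Submodule.mem_inf.1 hx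
  obtain ⟨j, hj, k, hk, hjk⟩ := Submodule.mem_sup.1 hxJK
  by_cases hx0 : x = 0
  · exact hx0 ▸ zero_mem _
  by_cases hj0 : j = 0
  · have : x = k := by rw [← hjk, hj0, zero_add]
    exact Submodule.mem_sup_right (Submodule.mem_inf.2 ⟨hxI, this ▸ hk⟩)
  by_cases hk0 : k = 0
  · have : x = j := by rw [← hjk, hk0, add_zero]
    exact Submodule.mem_sup_left (Submodule.mem_inf.2 ⟨hxI, this ▸ hj⟩)
  -- principal ideals
  set A := Ideal.span {x} with hA
  set B := Ideal.span {j} with hB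
  set C := Ideal.span {k} with hC
  have hABC : A ⊔ B ⊔ C ≠ ⊥ := by
    intro h
    have : A ≤ ⊥ := h ▸ le_sup_of_le_left le_sup_left
    exact hx0 (Ideal.span_singleton_eq_bot.1 (le_bot_iff.1 this))
  have hfg : (A ⊔ B ⊔ C).FG :=
    Submodule.FG.sup (Submodule.FG.sup ⟨{x}, by simp [hA]⟩ ⟨{j}, by simp [hB]⟩) ⟨{k}, by simp [hC]⟩
  have hunit := hR _ hABC hfg
  have hunit' : IsUnit ((A : FractionalIdeal (nonZeroDivisors R) (FractionRing R)) + ↑B + ↑C) := by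
    rwa [← FractionalIdeal.coeIdeal_sup, ← FractionalIdeal.coeIdeal_sup]
  have key : (↑A : FractionalIdeal (nonZeroDivisors R) (FractionRing R)) ⊓ (↑B + ↑C)
      ≤ (↑A ⊓ ↑B) + (↑A ⊓ ↑C) := frac_distrib _ _ _ hunit'
  rw [← FractionalIdeal.coeIdeal_sup, ← coeIdeal_inf', ← coeIdeal_inf', ← coeIdeal_inf',
    ← FractionalIdeal.coeIdeal_sup, FractionalIdeal.coeIdeal_le_coeIdeal] at key
  have hxmem : x ∈ A ⊓ (B ⊔ C) := by
    refine Submodule.mem_inf.2 ⟨Ideal.subset_span rfl, ?_⟩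
    exact Submodule.mem_sup.2 ⟨j, Ideal.subset_span rfl, k, Ideal.subset_span rfl, hjk⟩
  have := key hxmem
  have hAI : A ≤ I := (Ideal.span_singleton_le_iff_mem _).2 hxI
  have hBJ : B ≤ J := (Ideal.span_singleton_le_iff_mem _).2 hj
  have hCK : C ≤ K := (Ideal.span_singleton_le_iff_mem _).2 hk
  have hmono : (A ⊓ B) ⊔ (A ⊓ C) ≤ (I ⊓ J) ⊔ (I ⊓ K) :=
    sup_le_sup (inf_le_inf hAI hBJ) (inf_le_inf hAI hCK)
  exact hmono this

lemma prufer_inf_sup_eq (hR : IsPruferDomain R) (I J K : Ideal R) :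
    I ⊓ (J ⊔ K) = (I ⊓ J) ⊔ (I ⊓ K) :=
  le_antisymm (prufer_inf_sup_le hR I J K)
    (sup_le (inf_le_inf_left I le_sup_left) (inf_le_inf_left I le_sup_right))

lemma prufer_sup_inf_eq (hR : IsPruferDomain R) (I J K : Ideal R) :
    I ⊔ (J ⊓ K) = (I ⊔ J) ⊓ (I ⊔ K) := by
  apply le_antisymm
  · exact le_inf (sup_le_sup_left inf_le_left _) (sup_le_sup_left inf_le_right _)
  · calc (I ⊔ J) ⊓ (I ⊔ K) = ((I ⊔ J) ⊓ I) ⊔ ((I ⊔ J) ⊓ K) := prufer_inf_sup_eq hR _ _ _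
      _ = I ⊔ (K ⊓ (I ⊔ J)) := by rw [inf_eq_right.2 (le_sup_left : I ≤ I ⊔ J),
            inf_comm (I ⊔ J) K]
      _ = I ⊔ ((K ⊓ I) ⊔ (K ⊓ J)) := by rw [prufer_inf_sup_eq hR]
      _ = (I ⊔ (K ⊓ I)) ⊔ (K ⊓ J) := (sup_assoc _ _ _).symm
      _ = I ⊔ (K ⊓ J) := by rw [sup_eq_left.2 (inf_le_right : K ⊓ I ≤ I)]
      _ ≤ I ⊔ (J ⊓ K) := by rw [inf_comm K J]

lemma prufer_sup_finsetInf (hR : IsPruferDomain R) {ι : Type*} (S : Finset ι)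
    (f : ι → Ideal R) (I : Ideal R) :
    I ⊔ S.inf f = S.inf fun b => I ⊔ f b := by
  classical
  induction S using Finset.induction with
  | empty => simp
  | insert _ _ hx ih =>
    rw [Finset.inf_insert, Finset.inf_insert, prufer_sup_inf_eq hR, ih]
end

section CRT
variable {R : Type*} [CommRing R] [IsDomain R]

lemma prufer_CRT (hR : IsPruferDomain R) {ι : Type*} (S : Finset ι)
    (I : ι → Ideal R) (x : ι → R)
    (hcompat : ∀ a ∈ S, ∀ b ∈ S, x a - x b ∈ I a ⊔ I b) :
    ∃ r : R, ∀ a ∈ S, r - x a ∈ I a := by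
  classical
  induction S using Finset.induction with
  | empty => exact ⟨0, by simp⟩
  | @insert a S ha ih =>
    obtain ⟨r', hr'⟩ := ih fun b hb c hc =>
      hcompat b (Finset.mem_insert_of_mem hb) c (Finset.mem_insert_of_mem hc)
    have hmem : x a - r' ∈ I a ⊔ S.inf I := by
      rw [prufer_sup_finsetInf hR, Submodule.mem_finsetInf]
      intro b hb
      have h1 : x a - x b ∈ I a ⊔ I b :=
        hcompat a (Finset.mem_insert_self a S) b (Finset.mem_insert_of_mem hb)
      have h2 : x b - r' ∈ I a ⊔ I b := by
        have := hr' b hb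
        have : -(r' - x b) ∈ I b := neg_mem this
        rw [neg_sub] at this
        exact le_sup_right (α := Ideal R) this
      have := add_mem h1 h2
      rwa [sub_add_sub_cancel] at this
    obtain ⟨p, hp, q, hq, hpq⟩ := Submodule.mem_sup.1 hmem
    refine ⟨r' + q, ?_⟩
    intro b hb
    rcases Finset.mem_insert.1 hb with rfl | hb
    · have : r' + q - x b = -p := by
        have : x b - r' = p + q := hpq.symm
        linear_combination -this
      rw [this]
      exact neg_mem hp
    · have : r' + q - x b = (r' - x b) + q := by ring
      rw [this]
      exact add_mem (hr' b hb) ((Finset.inf_le hb : S.inf I ≤ I b) hq)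
end CRT


section Triangle
variable {V R : Type*} [CommRing R] [IsDomain R] {G : SimpleGraph V} {α : Sym2 V → Ideal R}

lemma pathsInf_triangle [Fintype V] (hR : IsPruferDomain R) (v a b : V) :
    pathsInf G α a b ≤ pathsInf G α v a ⊔ pathsInf G α v b := by
  classical
  rw [pathsInf_eq_finsetInf v a, pathsInf_eq_finsetInf v b, sup_comm,
    prufer_sup_finsetInf hR]
  refine Finset.le_inf fun p _ => ?_
  rw [sup_comm, prufer_sup_finsetInf hR]
  refine Finset.le_inf fun q _ => ?_
  have heq : walkIdealSum G α (p.1.reverse.append q.1)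
      = walkIdealSum G α p.1 ⊔ walkIdealSum G α q.1 := by
    rw [walkIdealSum_append, walkIdealSum_reverse, Submodule.add_eq_sup]
  exact (pathsInf_le_of_walk _).trans heq.le
end Triangle

theorem prufer_UDP {V R : Type*} [Fintype V] [CommRing R] [IsDomain R]
    (hR : IsPruferDomain R) (G : SimpleGraph V) (α : Sym2 V → Ideal R) :
    UDP G α := by
  classical
  intro u w _hreach x hx
  by_cases huw : u = w
  · subst huw
    rw [pathsInf_self] at hx
    refine ⟨fun _ => 0, fun a b _ => by simpa using zero_mem (α s(a, b)), by simpa using hx.symm⟩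
  have main : ∀ S : Finset V, ∃ ρ : V → R, ρ u - ρ w = x ∧
      ∀ a ∈ S ∪ ({u, w} : Finset V), ∀ b ∈ S ∪ ({u, w} : Finset V),
        ρ a - ρ b ∈ pathsInf G α a b := by
    intro S
    induction S using Finset.induction with
    | empty =>
      set ρ₀ : V → R := fun t => if t = u then x else 0 with hρ₀
      have hρu : ρ₀ u = x := if_pos rfl
      have hρw : ρ₀ w = 0 := if_neg fun h => huw h.symm
      refine ⟨ρ₀, by rw [hρu, hρw, sub_zero], ?_⟩
      intro a ha b hb
      simp only [Finset.empty_union, Finset.mem_insert, Finset.mem_singleton] at ha hb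
      rcases ha with ha | ha <;> rcases hb with hb | hb
      · rw [ha, hb]
        simpa using zero_mem (pathsInf G α u u)
      · rw [ha, hb, hρu, hρw, sub_zero]
        exact hx
      · rw [ha, hb, hρu, hρw, zero_sub, pathsInf_symm w u]
        exact neg_mem hx
      · rw [ha, hb]
        simpa using zero_mem (pathsInf G α w w)
    | @insert v S hv ih =>
      obtain ⟨ρ, hρuw, hρ⟩ := ih
      by_cases hvmem : v ∈ S ∪ ({u, w} : Finset V)
      · refine ⟨ρ, hρuw, ?_⟩
        intro a ha b hb
        refine hρ a ?_ b ?_ <;>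
          [skip; skip] <;>
          · first
            | (rcases Finset.mem_union.1 ha with h | h
               · rcases Finset.mem_insert.1 h with rfl | h
                 · exact hvmem
                 · exact Finset.mem_union_left _ h
               · exact Finset.mem_union_right _ h)
            | (rcases Finset.mem_union.1 hb with h | h
               · rcases Finset.mem_insert.1 h with rfl | h
                 · exact hvmem
                 · exact Finset.mem_union_left _ h
               · exact Finset.mem_union_right _ h)
      · set T := S ∪ ({u, w} : Finset V) with hT
        have hcompat : ∀ a ∈ T, ∀ b ∈ T,
            ρ a - ρ b ∈ pathsInf G α v a ⊔ pathsInf G α v b := fun a ha b hb =>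
          (pathsInf_triangle hR v a b) (hρ a ha b hb)
        obtain ⟨r, hr⟩ := prufer_CRT hR T (fun a => pathsInf G α v a) ρ hcompat
        have huT : u ∈ T := Finset.mem_union_right _ (by simp)
        have hwT : w ∈ T := Finset.mem_union_right _ (by simp)
        have huv : u ≠ v := fun h => hvmem (h ▸ huT)
        have hwv : w ≠ v := fun h => hvmem (h ▸ hwT)
        refine ⟨Function.update ρ v r, ?_, ?_⟩
        · rw [Function.update_of_ne huv, Function.update_of_ne hwv]
          exact hρuw
        · intro a ha b hb
          have hmem : ∀ c, c ∈ insert v S ∪ ({u, w} : Finset V) → c = v ∨ c ∈ T := by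
            intro c hc
            rcases Finset.mem_union.1 hc with h | h
            · rcases Finset.mem_insert.1 h with rfl | h
              · exact Or.inl rfl
              · exact Or.inr (Finset.mem_union_left _ h)
            · exact Or.inr (Finset.mem_union_right _ h)
          have hTv : ∀ c, c ∈ T → c ≠ v := fun c hc h => hvmem (h ▸ hc)
          rcases hmem a ha with rfl | haT <;> rcases hmem b hb with rfl | hbT
          · simpa using zero_mem (pathsInf G α a a)
          · rw [Function.update_self, Function.update_of_ne (hTv b hbT)]
            exact hr b hbT
          · rw [Function.update_self, Function.update_of_ne (hTv a haT)]
            have := neg_mem (hr a haT)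
            rw [neg_sub] at this
            rw [pathsInf_symm]
            exact this
          · rw [Function.update_of_ne (hTv a haT), Function.update_of_ne (hTv b hbT)]
            exact hρ a haT b hbT
  obtain ⟨ρ, h1, h2⟩ := main Finset.univ
  refine ⟨ρ, ?_, h1⟩
  intro a b hab
  exact (pathsInf_le_edge hab) (h2 a (by simp) b (by simp))
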